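/- (Strict bound for the vertical derivative of the stream function, negative vorticity case.) Let γ < 0. Suppose η : ℝ×[0,1] → ℝ is continuously differentiable with η_x² + η_y² > 0 everywhere on the closed strip, and Ψ : ℝ×[0,1] → ℝ is bounded, continuously differentiable on the closed strip, twice continuously differentiable in R, satisfies ΔΨ = γ·(η_x² + η_y²) in R, Ψ(x,1) = 1 − γ/2 for all x, and Ψ(x,0) = 0 for all x. Then ∂_y Ψ(x,1) < 1 − γ/2 for every x ∈ ℝ. -/

import Mathlib

open Filter Topology Set


/-- The closed strip `ℝ × [0,1]`. -/
def strip : Set (ℝ × ℝ) := {p : ℝ × ℝ | p.2 ∈ Set.Icc (0 : ℝ) 1}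

/-- The open strip `R = ℝ × (0,1)`. -/
def stripO : Set (ℝ × ℝ) := {p : ℝ × ℝ | p.2 ∈ Set.Ioo (0 : ℝ) 1}

/-- Partial derivative in the first (horizontal) variable, taken within the closed strip
(at interior points it agrees with the usual partial derivative; on the boundary it is
the one-sided partial derivative). -/
noncomputable def pdx (f : ℝ × ℝ → ℝ) (p : ℝ × ℝ) : ℝ := fderivWithin ℝ f strip p (1, 0)

/-- Partial derivative in the second (vertical) variable, taken within the closed strip. -/
noncomputable def pdy (f : ℝ × ℝ → ℝ) (p : ℝ × ℝ) : ℝ := fderivWithin ℝ f strip p (0, 1)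

lemma isOpen_stripO : IsOpen stripO := isOpen_Ioo.preimage continuous_snd

lemma stripO_subset : stripO ⊆ strip := fun p hp => ⟨le_of_lt hp.1, le_of_lt hp.2⟩

lemma strip_eq : strip = Set.univ ×ˢ Set.Icc (0:ℝ) 1 := by
  ext p; simp [strip, Set.mem_prod]

lemma uniqueDiffOn_strip : UniqueDiffOn ℝ strip := by
  rw [strip_eq]
  exact UniqueDiffOn.prod uniqueDiffOn_univ (uniqueDiffOn_Icc one_pos)

lemma strip_mem_nhds {p : ℝ × ℝ} (hp : p ∈ stripO) : strip ∈ 𝓝 p :=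
  Filter.mem_of_superset (isOpen_stripO.mem_nhds hp) stripO_subset

/-- Second derivative test: at an interior local min, the second derivative is ≥ 0. -/
lemma second_deriv_test {g g' : ℝ → ℝ} {x0 m : ℝ} {s : Set ℝ} (hs : s ∈ 𝓝 x0)
    (hg : ∀ t ∈ s, HasDerivAt g (g' t) t) (h2 : HasDerivAt g' m x0)
    (hmin : IsLocalMin g x0) : 0 ≤ m := by
  by_contra hneg
  push_neg at hneg
  have hg'0 : g' x0 = 0 := by
    have h1 : deriv g x0 = 0 := hmin.deriv_eq_zero
    have h2' : deriv g x0 = g' x0 := (hg x0 (mem_of_mem_nhds hs)).deriv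
    linarith [h2'.symm.trans h1]
  have hslope : Filter.Tendsto (slope g' x0) (𝓝[≠] x0) (𝓝 m) :=
    hasDerivAt_iff_tendsto_slope.1 h2
  have hev : ∀ᶠ t in 𝓝[≠] x0, slope g' x0 t < 0 := hslope.eventually_lt_const hneg
  have hev2 : ∀ᶠ t in 𝓝 x0, t ≠ x0 → slope g' x0 t < 0 := by
    have := eventually_nhdsWithin_iff.1 hev
    filter_upwards [this] with t h ht using h ht
  have hall : ∀ᶠ t in 𝓝 x0, (t ∈ s ∧ (t ≠ x0 → slope g' x0 t < 0) ∧ g x0 ≤ g t) := by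
    filter_upwards [hs, hev2, hmin] with t h1 h2 h3 using ⟨h1, h2, h3⟩
  obtain ⟨ε, hε, hball⟩ := Metric.eventually_nhds_iff.1 hall
  set b := x0 + ε/2 with hb
  have hblt : ∀ t ∈ Set.Icc x0 b, dist t x0 < ε := by
    intro t ht
    rw [Set.mem_Icc] at ht
    obtain ⟨ht1, ht2⟩ := ht
    rw [hb] at ht2
    rw [Real.dist_eq, abs_lt]
    constructor
    · linarith
    · linarith
  have hderivneg : ∀ t ∈ Set.Ioo x0 b, deriv g t < 0 := by
    intro t ht
    have h := hball (hblt t ⟨le_of_lt ht.1, le_of_lt ht.2⟩)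
    have hsl := h.2.1 (ne_of_gt ht.1)
    have : g' t < 0 := by
      have := hsl
      rw [slope_def_field, hg'0] at this
      have htx : 0 < t - x0 := by linarith [ht.1]
      have := (div_neg_iff.1 (by simpa [div_eq_iff (ne_of_gt htx)] using this))
      rcases this with ⟨h1, h2⟩ | ⟨h1, h2⟩
      · linarith
      · linarith
    rwa [(hg t (hball (hblt t ⟨le_of_lt ht.1, le_of_lt ht.2⟩)).1).deriv]
  have hcont : ContinuousOn g (Set.Icc x0 b) := by
    intro t ht
    exact ((hg t (hball (hblt t ht)).1).continuousAt).continuousWithinAt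
  have hanti : StrictAntiOn g (Set.Icc x0 b) := by
    apply strictAntiOn_of_deriv_neg (convex_Icc x0 b) hcont
    intro t ht
    rw [interior_Icc] at ht
    exact hderivneg t ht
  have hx0b : x0 < b := by simp [hb]; linarith
  have hlt : g b < g x0 := hanti (Set.left_mem_Icc.2 (le_of_lt hx0b)) (Set.right_mem_Icc.2 (le_of_lt hx0b)) hx0b
  have hge : g x0 ≤ g b := (hball (by rw [Real.dist_eq]; rw [abs_lt]; constructor <;> simp [hb] <;> linarith)).2.2
  linarith

/-- At a point where the (slice-wise) Laplacian is negative, there is no local minimum. -/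
lemma no_local_min {u : ℝ × ℝ → ℝ} {p : ℝ × ℝ} {ux uy : ℝ → ℝ} {A B : ℝ} {sx sy : Set ℝ}
    (hsx : sx ∈ 𝓝 p.1) (hsy : sy ∈ 𝓝 p.2)
    (hux : ∀ t ∈ sx, HasDerivAt (fun s => u (s, p.2)) (ux t) t)
    (huy : ∀ t ∈ sy, HasDerivAt (fun s => u (p.1, s)) (uy t) t)
    (hA : HasDerivAt ux A p.1) (hB : HasDerivAt uy B p.2)
    (hneg : A + B < 0) : ¬ IsLocalMin u p := by
  intro hmin
  have hcx : Filter.Tendsto (fun t : ℝ => (t, p.2)) (𝓝 p.1) (𝓝 p) := by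
    have : Continuous (fun t : ℝ => (t, p.2)) := continuous_id.prodMk continuous_const
    simpa using this.tendsto p.1
  have hcy : Filter.Tendsto (fun t : ℝ => (p.1, t)) (𝓝 p.2) (𝓝 p) := by
    have : Continuous (fun t : ℝ => ((p.1 : ℝ), t)) := continuous_const.prodMk continuous_id
    simpa using this.tendsto p.2
  have hminx : IsLocalMin (fun s => u (s, p.2)) p.1 := by
    have := hcx.eventually hmin
    simpa [IsLocalMin, IsMinFilter] using this
  have hminy : IsLocalMin (fun s => u (p.1, s)) p.2 := by
    have := hcy.eventually hmin
    simpa [IsLocalMin, IsMinFilter] using this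
  have h1 : 0 ≤ A := second_deriv_test hsx hux hA hminx
  have h2 : 0 ≤ B := second_deriv_test hsy huy hB hminy
  linarith

/-- Minimum principle on a closed box for functions with no interior local minimum. -/
lemma box_min {u : ℝ × ℝ → ℝ} {a b c d : ℝ} (hab : a < b) (hcd : c < d)
    (hcont : ContinuousOn u (Set.Icc a b ×ˢ Set.Icc c d))
    (hint : ∀ p ∈ Set.Ioo a b ×ˢ Set.Ioo c d, ¬ IsLocalMin u p)
    (hbd : ∀ p ∈ Set.Icc a b ×ˢ Set.Icc c d,
      (p.1 = a ∨ p.1 = b ∨ p.2 = c ∨ p.2 = d) → 0 ≤ u p) :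
    ∀ p ∈ Set.Icc a b ×ˢ Set.Icc c d, 0 ≤ u p := by
  set K := Set.Icc a b ×ˢ Set.Icc c d with hK
  have hKc : IsCompact K := isCompact_Icc.prod isCompact_Icc
  have hKne : K.Nonempty := by
    exact ⟨(a, c), by constructor <;> simp [hab.le, hcd.le]⟩
  obtain ⟨p0, hp0K, hp0min⟩ := hKc.exists_isMinOn hKne hcont
  have h0 : 0 ≤ u p0 := by
    by_cases hio : p0 ∈ Set.Ioo a b ×ˢ Set.Ioo c d
    · exfalso
      apply hint p0 hio
      apply hp0min.isLocalMin
      apply Filter.mem_of_superset _ (by rfl : K ⊆ K)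
      have : IsOpen (Set.Ioo a b ×ˢ Set.Ioo c d) := isOpen_Ioo.prod isOpen_Ioo
      exact Filter.mem_of_superset (this.mem_nhds hio)
        (Set.prod_mono Set.Ioo_subset_Icc_self Set.Ioo_subset_Icc_self)
    · apply hbd p0 hp0K
      obtain ⟨⟨h1, h2⟩, h3, h4⟩ := hp0K
      rcases eq_or_lt_of_le h1 with h1' | h1'
      · exact Or.inl h1'.symm
      rcases eq_or_lt_of_le h2 with h2' | h2'
      · exact Or.inr (Or.inl h2')
      rcases eq_or_lt_of_le h3 with h3' | h3'
      · exact Or.inr (Or.inr (Or.inl h3'.symm))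
      rcases eq_or_lt_of_le h4 with h4' | h4'
      · exact Or.inr (Or.inr (Or.inr h4'))
      exact absurd ⟨⟨h1', h2'⟩, h3', h4'⟩ hio
  intro p hp
  exact le_trans h0 (hp0min hp)

/-- Minimum principle on a box for a strictly superharmonic function. -/
lemma min_box {w wx wy wxx wyy : ℝ × ℝ → ℝ} {a b c d : ℝ} (hab : a < b) (hcd : c < d)
    (hcont : ContinuousOn w (Set.Icc a b ×ˢ Set.Icc c d))
    (hx : ∀ p ∈ Set.Ioo a b ×ˢ Set.Ioo c d, ∀ t ∈ Set.Ioo a b,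
      HasDerivAt (fun s => w (s, p.2)) (wx (t, p.2)) t)
    (hy : ∀ p ∈ Set.Ioo a b ×ˢ Set.Ioo c d, ∀ t ∈ Set.Ioo c d,
      HasDerivAt (fun s => w (p.1, s)) (wy (p.1, t)) t)
    (hx2 : ∀ p ∈ Set.Ioo a b ×ˢ Set.Ioo c d,
      HasDerivAt (fun s => wx (s, p.2)) (wxx p) p.1)
    (hy2 : ∀ p ∈ Set.Ioo a b ×ˢ Set.Ioo c d,
      HasDerivAt (fun s => wy (p.1, s)) (wyy p) p.2)
    (hneg : ∀ p ∈ Set.Ioo a b ×ˢ Set.Ioo c d, wxx p + wyy p < 0)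
    (hbd : ∀ p ∈ Set.Icc a b ×ˢ Set.Icc c d,
      (p.1 = a ∨ p.1 = b ∨ p.2 = c ∨ p.2 = d) → 0 ≤ w p) :
    ∀ p ∈ Set.Icc a b ×ˢ Set.Icc c d, 0 ≤ w p := by
  apply box_min hab hcd hcont _ hbd
  intro p hp
  exact no_local_min (isOpen_Ioo.mem_nhds hp.1) (isOpen_Ioo.mem_nhds hp.2)
    (fun t ht => hx p hp t ht) (fun t ht => hy p hp t ht) (hx2 p hp) (hy2 p hp) (hneg p hp)

noncomputable def px (f : ℝ × ℝ → ℝ) (q : ℝ × ℝ) : ℝ := fderiv ℝ f q (1, 0)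
noncomputable def py (f : ℝ × ℝ → ℝ) (q : ℝ × ℝ) : ℝ := fderiv ℝ f q (0, 1)
noncomputable def pxx (f : ℝ × ℝ → ℝ) (q : ℝ × ℝ) : ℝ := fderiv ℝ (px f) q (1, 0)
noncomputable def pyy (f : ℝ × ℝ → ℝ) (q : ℝ × ℝ) : ℝ := fderiv ℝ (py f) q (0, 1)

section pack
variable {f : ℝ × ℝ → ℝ} (hf : ContDiffOn ℝ 2 f stripO)
include hf

lemma hasFDerivAt_of_C2 {p : ℝ × ℝ} (hp : p ∈ stripO) : HasFDerivAt f (fderiv ℝ f p) p :=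
  (((hf.differentiableOn (by norm_num)).differentiableAt (isOpen_stripO.mem_nhds hp))).hasFDerivAt

lemma fderiv_diffAt {p : ℝ × ℝ} (hp : p ∈ stripO) : DifferentiableAt ℝ (fderiv ℝ f) p := by
  have h := hf.fderiv_of_isOpen isOpen_stripO (by norm_num : (1:WithTop ℕ∞) + 1 ≤ 2)
  exact (h.differentiableOn one_ne_zero).differentiableAt (isOpen_stripO.mem_nhds hp)

lemma sliceX {p : ℝ × ℝ} (hp : p ∈ stripO) (t : ℝ) :
    HasDerivAt (fun s => f (s, p.2)) (px f (t, p.2)) t := by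
  have hmem : ((t : ℝ), p.2) ∈ stripO := hp
  have hc : HasDerivAt (fun s : ℝ => ((s : ℝ), p.2)) ((1 : ℝ), (0 : ℝ)) t :=
    (hasDerivAt_id t).prodMk (hasDerivAt_const t p.2)
  exact (hasFDerivAt_of_C2 hf hmem).comp_hasDerivAt t hc

lemma sliceY {p : ℝ × ℝ} (hp : p ∈ stripO) {t : ℝ} (ht : t ∈ Set.Ioo (0:ℝ) 1) :
    HasDerivAt (fun s => f (p.1, s)) (py f (p.1, t)) t := by
  have hmem : ((p.1 : ℝ), t) ∈ stripO := ht
  have hc : HasDerivAt (fun s : ℝ => ((p.1 : ℝ), s)) ((0 : ℝ), (1 : ℝ)) t :=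
    (hasDerivAt_const t p.1).prodMk (hasDerivAt_id t)
  exact (hasFDerivAt_of_C2 hf hmem).comp_hasDerivAt t hc

lemma px_diffAt {p : ℝ × ℝ} (hp : p ∈ stripO) : DifferentiableAt ℝ (px f) p :=
  (fderiv_diffAt hf hp).clm_apply (differentiableAt_const _)

lemma py_diffAt {p : ℝ × ℝ} (hp : p ∈ stripO) : DifferentiableAt ℝ (py f) p :=
  (fderiv_diffAt hf hp).clm_apply (differentiableAt_const _)

lemma sliceXX {p : ℝ × ℝ} (hp : p ∈ stripO) :
    HasDerivAt (fun s => px f (s, p.2)) (pxx f p) p.1 := by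
  have hc : HasDerivAt (fun s : ℝ => ((s : ℝ), p.2)) ((1 : ℝ), (0 : ℝ)) p.1 :=
    (hasDerivAt_id p.1).prodMk (hasDerivAt_const p.1 p.2)
  have h := ((px_diffAt hf hp).hasFDerivAt).comp_hasDerivAt p.1 (by simpa using hc)
  simpa [pxx, Function.comp_def] using h

lemma sliceYY {p : ℝ × ℝ} (hp : p ∈ stripO) :
    HasDerivAt (fun s => py f (p.1, s)) (pyy f p) p.2 := by
  have hc : HasDerivAt (fun s : ℝ => ((p.1 : ℝ), s)) ((0 : ℝ), (1 : ℝ)) p.2 :=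
    (hasDerivAt_const p.2 p.1).prodMk (hasDerivAt_id p.2)
  have h := ((py_diffAt hf hp).hasFDerivAt).comp_hasDerivAt p.2 (by simpa using hc)
  simpa [pyy, Function.comp_def] using h

lemma pdx_eq_px {p : ℝ × ℝ} (hp : p ∈ stripO) : pdx f p = px f p := by
  rw [pdx, fderivWithin_of_mem_nhds (strip_mem_nhds hp)]; rfl

lemma pdy_eq_py {p : ℝ × ℝ} (hp : p ∈ stripO) : pdy f p = py f p := by
  rw [pdy, fderivWithin_of_mem_nhds (strip_mem_nhds hp)]; rfl

lemma pdxx_eq_pxx {p : ℝ × ℝ} (hp : p ∈ stripO) : pdx (pdx f) p = pxx f p := by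
  rw [pdx, fderivWithin_of_mem_nhds (strip_mem_nhds hp)]
  have hev : pdx f =ᶠ[𝓝 p] px f :=
    Filter.eventually_of_mem (isOpen_stripO.mem_nhds hp) (fun q hq => pdx_eq_px hf hq)
  rw [hev.fderiv_eq]; rfl

lemma pdyy_eq_pyy {p : ℝ × ℝ} (hp : p ∈ stripO) : pdy (pdy f) p = pyy f p := by
  rw [pdy, fderivWithin_of_mem_nhds (strip_mem_nhds hp)]
  have hev : pdy f =ᶠ[𝓝 p] py f :=
    Filter.eventually_of_mem (isOpen_stripO.mem_nhds hp) (fun q hq => pdy_eq_py hf hq)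
  rw [hev.fderiv_eq]; rfl

end pack

lemma hasDerivAt_congr_val {f : ℝ → ℝ} {v v' x : ℝ} (hv : v' = v) (h : HasDerivAt f v x) :
    HasDerivAt f v' x := hv ▸ h


set_option maxHeartbeats 2000000 in
/-- Strict bound for the vertical derivative of the stream function (negative vorticity):
if `γ < 0`, `η` is `C¹` on the closed strip with nonvanishing gradient, and `Ψ` is
bounded, `C¹` on the closed strip, `C²` in the open strip, satisfies
`ΔΨ = γ(η_x² + η_y²)` in `R`, `Ψ = 1 − γ/2` on `Γ` and `Ψ = 0` on `B`, then
`∂_yΨ(x,1) < 1 − γ/2` for every `x`. -/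
theorem stmt_18 (γ : ℝ) (hγ : γ < 0) (η Ψ : ℝ × ℝ → ℝ)
    (hηC : ContDiffOn ℝ 1 η strip)
    (hηgrad : ∀ p ∈ strip, 0 < (pdx η p) ^ 2 + (pdy η p) ^ 2)
    (hΨbd : ∃ K : ℝ, ∀ p ∈ strip, |Ψ p| ≤ K)
    (hΨC1 : ContDiffOn ℝ 1 Ψ strip)
    (hΨC2 : ContDiffOn ℝ 2 Ψ stripO)
    (hΔ : ∀ p ∈ stripO, pdx (pdx Ψ) p + pdy (pdy Ψ) p = γ * ((pdx η p) ^ 2 + (pdy η p) ^ 2))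
    (hΓ : ∀ x : ℝ, Ψ (x, 1) = 1 - γ / 2)
    (hB : ∀ x : ℝ, Ψ (x, 0) = 0) :
    ∀ x : ℝ, pdy Ψ (x, 1) < 1 - γ / 2 := by
  classical
  obtain ⟨K, hK⟩ := hΨbd
  obtain ⟨c, hc⟩ : ∃ c : ℝ, c = 1 - γ / 2 := ⟨_, rfl⟩
  have hLap : ∀ p ∈ stripO, pxx Ψ p + pyy Ψ p = γ * ((pdx η p) ^ 2 + (pdy η p) ^ 2) := by
    intro p hp
    rw [← pdxx_eq_pxx hΨC2 hp, ← pdyy_eq_pyy hΨC2 hp]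
    exact hΔ p hp
  have hLapneg : ∀ p ∈ stripO, pxx Ψ p + pyy Ψ p < 0 := by
    intro p hp
    rw [hLap p hp]
    exact mul_neg_of_neg_of_pos hγ (hηgrad p (stripO_subset hp))
  obtain ⟨K', hK'⟩ : ∃ K' : ℝ, K' = K + |c| := ⟨_, rfl⟩
  have hvbd : ∀ p ∈ strip, -K' ≤ Ψ p - c * p.2 := by
    intro p hp
    have h1 := (abs_le.1 (hK p hp)).1
    have h2 : c * p.2 ≤ |c| := by
      calc c * p.2 ≤ |c * p.2| := le_abs_self _
      _ = |c| * |p.2| := abs_mul _ _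
      _ ≤ |c| * 1 := by
          apply mul_le_mul_of_nonneg_left _ (abs_nonneg c)
          rw [abs_le]; exact ⟨by linarith [hp.1], hp.2⟩
      _ = |c| := mul_one _
    simp only [hK']
    linarith
  have hK'0 : 0 ≤ K' := by
    have h0 := hK (0, 0) (by constructor <;> norm_num)
    have := abs_nonneg (Ψ (0, 0))
    have := abs_nonneg c
    simp only [hK']
    linarith
  -- Step 1: Ψ - c y ≥ 0 on the strip (Phragmén–Lindelöf)
  have hv0 : ∀ p ∈ strip, 0 ≤ Ψ p - c * p.2 := by
    intro p hp
    by_contra hcon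
    push_neg at hcon
    obtain ⟨ε, hε⟩ : ∃ ε : ℝ, ε = -(Ψ p - c * p.2) := ⟨_, rfl⟩
    have hε0 : 0 < ε := by rw [hε]; linarith
    obtain ⟨R, hR⟩ : ∃ R : ℝ, R = 1 + K' / (4 * ε) := ⟨_, rfl⟩
    have hR1 : 1 ≤ R := by
      have := div_nonneg hK'0 (by linarith : (0:ℝ) ≤ 4 * ε)
      rw [hR]; linarith
    have hR0 : 0 < R := lt_of_lt_of_le one_pos hR1
    obtain ⟨cc, hcc⟩ : ∃ cc : ℝ, cc = K' / R ^ 2 := ⟨_, rfl⟩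
    have hcc0 : 0 ≤ cc := hcc ▸ div_nonneg hK'0 (by positivity)
    have hccR : cc * R ^ 2 = K' := by
      rw [hcc]; exact div_mul_cancel₀ _ (by positivity)
    have hKR : K' = 4 * ε * (R - 1) := by
      rw [hR]
      field_simp
      ring
    obtain ⟨X, hX⟩ : ∃ X : ℝ, X = p.1 := ⟨_, rfl⟩
    have hkey : ∀ q ∈ Set.Icc (X - R) (X + R) ×ˢ Set.Icc (0:ℝ) 1,
        0 ≤ Ψ q - c * q.2 + cc * ((q.1 - X) ^ 2 - (q.2 - 1/2) ^ 2 + 1/4) := by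
      apply min_box (wx := fun q => px Ψ q + cc * (2 * (q.1 - X)))
        (wy := fun q => py Ψ q - c - cc * (2 * (q.2 - 1/2)))
        (wxx := fun q => pxx Ψ q + cc * 2)
        (wyy := fun q => pyy Ψ q - cc * 2)
        (by linarith) (by norm_num)
      · -- continuity
        have hboxsub : Set.Icc (X - R) (X + R) ×ˢ Set.Icc (0:ℝ) 1 ⊆ strip :=
          fun q hq => hq.2
        apply ContinuousOn.add
        · exact (hΨC1.continuousOn.mono hboxsub).sub (by fun_prop)
        · fun_prop
      · -- hx
        intro p' hp' t ht
        have hp'O : p' ∈ stripO := hp'.2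
        have h3 : HasDerivAt (fun s : ℝ => s - X) 1 t := (hasDerivAt_id t).sub_const X
        exact hasDerivAt_congr_val (by ring)
          (((sliceX hΨC2 hp'O t).sub_const (c * p'.2)).add
            ((((h3.pow 2).sub_const ((p'.2 - 1/2) ^ 2)).add_const (1/4)).const_mul cc))
      · -- hy
        intro p' hp' t ht
        have hp'O : p' ∈ stripO := hp'.2
        have htO : t ∈ Set.Ioo (0:ℝ) 1 := ht
        have h3 : HasDerivAt (fun s : ℝ => s - 1/2) 1 t := (hasDerivAt_id t).sub_const (1/2)
        exact hasDerivAt_congr_val (by ring)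
          (((sliceY hΨC2 hp'O htO).sub ((hasDerivAt_id t).const_mul c)).add
            ((((h3.pow 2).const_sub ((p'.1 - X) ^ 2)).add_const (1/4)).const_mul cc))
      · -- hx2
        intro p' hp'
        have hp'O : p' ∈ stripO := hp'.2
        exact hasDerivAt_congr_val (by ring)
          ((sliceXX hΨC2 hp'O).add
            ((((hasDerivAt_id p'.1).sub_const X).const_mul 2).const_mul cc))
      · -- hy2
        intro p' hp'
        have hp'O : p' ∈ stripO := hp'.2
        exact hasDerivAt_congr_val (by ring)
          (((sliceYY hΨC2 hp'O).sub_const c).sub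
            ((((hasDerivAt_id p'.2).sub_const (1/2)).const_mul 2).const_mul cc))
      · -- hneg
        intro p' hp'
        have hp'O : p' ∈ stripO := hp'.2
        have := hLapneg p' hp'O
        show pxx Ψ p' + cc * 2 + (pyy Ψ p' - cc * 2) < 0
        linarith
      · -- boundary
        intro q hq hcase
        obtain ⟨⟨hq1a, hq1b⟩, hq2a, hq2b⟩ := hq
        have hqs : q ∈ strip := ⟨hq2a, hq2b⟩
        have hvq := hvbd q hqs
        show 0 ≤ Ψ q - c * q.2 + cc * ((q.1 - X) ^ 2 - (q.2 - 1/2) ^ 2 + 1/4)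
        rcases hcase with h | h | h | h
        · have h2 : (q.1 - X) ^ 2 = R ^ 2 := by rw [h]; ring
          rw [h2]
          have hs2 : (q.2 - 1/2) ^ 2 ≤ 1/4 := by nlinarith
          nlinarith [mul_nonneg hcc0 (by linarith : (0:ℝ) ≤ 1/4 - (q.2 - 1/2) ^ 2)]
        · have h2 : (q.1 - X) ^ 2 = R ^ 2 := by rw [h]; ring
          rw [h2]
          have hs2 : (q.2 - 1/2) ^ 2 ≤ 1/4 := by nlinarith
          nlinarith [mul_nonneg hcc0 (by linarith : (0:ℝ) ≤ 1/4 - (q.2 - 1/2) ^ 2)]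
        · have hΨq : Ψ q = 0 := by
            rw [show q = (q.1, (0:ℝ)) from Prod.ext rfl h]
            exact hB q.1
          rw [hΨq, h]
          linarith [mul_nonneg hcc0 (sq_nonneg (q.1 - X))]
        · have hΨq : Ψ q = c := by
            rw [show q = (q.1, (1:ℝ)) from Prod.ext rfl h, hc]
            exact hΓ q.1
          rw [hΨq, h]
          linarith [mul_nonneg hcc0 (sq_nonneg (q.1 - X))]
    have hmem : p ∈ Set.Icc (X - R) (X + R) ×ˢ Set.Icc (0:ℝ) 1 := by
      refine ⟨⟨by rw [hX]; linarith, by rw [hX]; linarith⟩, hp⟩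
    have hfin := hkey p hmem
    have hzero : (p.1 - X) ^ 2 = 0 := by rw [hX]; ring
    rw [hzero] at hfin
    have hs : 0 ≤ cc * (p.2 - 1/2) ^ 2 := mul_nonneg hcc0 (sq_nonneg _)
    have h1 : 4 * ε ≤ cc := by linarith
    have h2 : 4 * ε * R ^ 2 ≤ cc * R ^ 2 := mul_le_mul_of_nonneg_right h1 (sq_nonneg R)
    have h3 : 0 < ε * (R ^ 2 - R + 1) := mul_pos hε0 (by nlinarith [sq_nonneg (R - 1/2)])
    linarith [h2, h3, hccR, hKR]
  -- Step 2: Hopf-type barrier near the top boundary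
  intro x0
  have hgc : ContinuousOn (fun p : ℝ × ℝ => (pdx η p) ^ 2 + (pdy η p) ^ 2) strip := by
    have h := hηC.continuousOn_fderivWithin uniqueDiffOn_strip (le_refl 1)
    have h1 : ContinuousOn (pdx η) strip := h.clm_apply continuousOn_const
    have h2 : ContinuousOn (pdy η) strip := h.clm_apply continuousOn_const
    exact (h1.pow 2).add (h2.pow 2)
  have hQsub : Set.Icc (x0 - 1/4) (x0 + 1/4) ×ˢ Set.Icc (3/4 : ℝ) 1 ⊆ strip :=
    fun q hq => ⟨by linarith [hq.2.1], hq.2.2⟩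
  obtain ⟨pm, hpmQ, hpm⟩ := (isCompact_Icc.prod isCompact_Icc).exists_isMinOn
    ⟨(x0, 1), ⟨⟨by linarith, by linarith⟩, by norm_num, le_refl 1⟩⟩ (hgc.mono hQsub)
  obtain ⟨m, hm⟩ : ∃ m : ℝ, m = -γ * ((pdx η pm) ^ 2 + (pdy η pm) ^ 2) := ⟨_, rfl⟩
  have hm0 : 0 < m := by
    rw [hm]; exact mul_pos (by linarith) (hηgrad pm (hQsub hpmQ))
  have hmQ : ∀ q ∈ Set.Icc (x0 - 1/4) (x0 + 1/4) ×ˢ Set.Icc (3/4 : ℝ) 1,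
      γ * ((pdx η q) ^ 2 + (pdy η q) ^ 2) ≤ -m := by
    intro q hq
    have h1 : (pdx η pm) ^ 2 + (pdy η pm) ^ 2 ≤ (pdx η q) ^ 2 + (pdy η q) ^ 2 := hpm hq
    have h2 : γ * ((pdx η q) ^ 2 + (pdy η q) ^ 2) ≤ γ * ((pdx η pm) ^ 2 + (pdy η pm) ^ 2) :=
      mul_le_mul_of_nonpos_left h1 (le_of_lt hγ)
    rw [hm]; linarith
  have hkey2 : ∀ q ∈ Set.Icc (x0 - 1/4) (x0 + 1/4) ×ˢ Set.Icc (3/4 : ℝ) 1,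
      0 ≤ Ψ q - c * q.2 - ((1 - q.2) * (m/32 - m/2 * (q.1 - x0) ^ 2) - m/4 * (1 - q.2) ^ 2) := by
    apply min_box
      (wx := fun q => px Ψ q + (1 - q.2) * (m/2 * (2 * (q.1 - x0))))
      (wy := fun q => py Ψ q - c + (m/32 - m/2 * (q.1 - x0) ^ 2) - m/2 * (1 - q.2))
      (wxx := fun q => pxx Ψ q + (1 - q.2) * (m/2 * 2))
      (wyy := fun q => pyy Ψ q + m/2)
      (by linarith) (by norm_num)
    · -- continuity
      apply ContinuousOn.sub
      · exact (hΨC1.continuousOn.mono hQsub).sub (by fun_prop)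
      · fun_prop
    · -- hx
      intro p' hp' t ht
      have hp'O : p' ∈ stripO := ⟨by linarith [hp'.2.1], hp'.2.2⟩
      have h3 : HasDerivAt (fun s : ℝ => s - x0) 1 t := (hasDerivAt_id t).sub_const x0
      exact hasDerivAt_congr_val (by ring)
        (((sliceX hΨC2 hp'O t).sub_const (c * p'.2)).sub
          (((((h3.pow 2).const_mul (m/2)).const_sub (m/32)).const_mul (1 - p'.2)).sub_const
            (m/4 * (1 - p'.2) ^ 2)))
    · -- hy
      intro p' hp' t ht
      have hp'O : p' ∈ stripO := ⟨by linarith [hp'.2.1], hp'.2.2⟩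
      have htO : t ∈ Set.Ioo (0:ℝ) 1 := ⟨by linarith [ht.1], ht.2⟩
      have h1s : HasDerivAt (fun s : ℝ => 1 - s) (-1) t := by
        simpa using (hasDerivAt_id t).const_sub 1
      exact hasDerivAt_congr_val (by ring)
        (((sliceY hΨC2 hp'O htO).sub ((hasDerivAt_id t).const_mul c)).sub
          ((h1s.mul_const (m/32 - m/2 * (p'.1 - x0) ^ 2)).sub ((h1s.pow 2).const_mul (m/4))))
    · -- hx2
      intro p' hp'
      have hp'O : p' ∈ stripO := ⟨by linarith [hp'.2.1], hp'.2.2⟩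
      exact hasDerivAt_congr_val (by ring)
        ((sliceXX hΨC2 hp'O).add
          ((((hasDerivAt_id p'.1).sub_const x0).const_mul 2).const_mul (m/2) |>.const_mul
            (1 - p'.2)))
    · -- hy2
      intro p' hp'
      have hp'O : p' ∈ stripO := ⟨by linarith [hp'.2.1], hp'.2.2⟩
      exact hasDerivAt_congr_val (by ring)
        ((((sliceYY hΨC2 hp'O).sub_const c).add_const (m/32 - m/2 * (p'.1 - x0) ^ 2)).sub
          (((hasDerivAt_id p'.2).const_sub 1).const_mul (m/2)))
    · -- hneg
      intro p' hp'
      have hp'O : p' ∈ stripO := ⟨by linarith [hp'.2.1], hp'.2.2⟩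
      have hΔq := hLap p' hp'O
      have hb := hmQ p' ⟨⟨le_of_lt hp'.1.1, le_of_lt hp'.1.2⟩,
        ⟨le_of_lt hp'.2.1, le_of_lt hp'.2.2⟩⟩
      have h14 : 1 - p'.2 < 1/4 := by linarith [hp'.2.1]
      have hprod : (1 - p'.2) * m < 1/4 * m := mul_lt_mul_of_pos_right h14 hm0
      show pxx Ψ p' + (1 - p'.2) * (m/2 * 2) + (pyy Ψ p' + m/2) < 0
      linarith [hΔq ▸ hb]
    · -- boundary
      intro q hq hcase
      obtain ⟨⟨hq1a, hq1b⟩, hq2a, hq2b⟩ := hq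
      have hqs : q ∈ strip := ⟨by linarith, hq2b⟩
      have hv := hv0 q hqs
      show 0 ≤ Ψ q - c * q.2 - ((1 - q.2) * (m/32 - m/2 * (q.1 - x0) ^ 2) - m/4 * (1 - q.2) ^ 2)
      rcases hcase with h | h | h | h
      · have h2 : m/32 - m/2 * (q.1 - x0) ^ 2 = 0 := by rw [h]; ring
        rw [h2]
        linarith [mul_nonneg (by linarith : (0:ℝ) ≤ m/4) (sq_nonneg (1 - q.2))]
      · have h2 : m/32 - m/2 * (q.1 - x0) ^ 2 = 0 := by rw [h]; ring
        rw [h2]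
        linarith [mul_nonneg (by linarith : (0:ℝ) ≤ m/4) (sq_nonneg (1 - q.2))]
      · rw [h] at hv ⊢
        linarith [mul_nonneg (by linarith : (0:ℝ) ≤ m/2) (sq_nonneg (q.1 - x0))]
      · rw [h] at hv ⊢
        linarith
  -- lower bound for Ψ on the vertical segment below (x0, 1)
  have hlow : ∀ t ∈ Set.Ico (15/16 : ℝ) 1, (1 - γ/2) * t + (1 - t) * (m/64) ≤ Ψ (x0, t) := by
    intro t ht
    have hmem : ((x0 : ℝ), t) ∈ Set.Icc (x0 - 1/4) (x0 + 1/4) ×ˢ Set.Icc (3/4 : ℝ) 1 :=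
      ⟨⟨by linarith, by linarith⟩, ⟨by linarith [ht.1], le_of_lt ht.2⟩⟩
    have h1 := hkey2 _ hmem
    have hz : ((x0 : ℝ) - x0) ^ 2 = 0 := by ring
    simp only [hz] at h1
    have e0 : 0 ≤ 1 - t := by linarith [ht.2]
    have e1 : 1 - t ≤ 1/16 := by linarith [ht.1]
    have e2 : (1 - t) ^ 2 ≤ 1/16 * (1 - t) := by nlinarith
    have e3 : m/4 * (1 - t) ^ 2 ≤ m/4 * (1/16 * (1 - t)) :=
      mul_le_mul_of_nonneg_left e2 (by linarith)
    rw [hc] at h1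
    linarith
  -- conclude via the difference quotient at (x0, 1)
  have hdw : DifferentiableWithinAt ℝ Ψ strip (x0, 1) :=
    (hΨC1.differentiableOn one_ne_zero) (x0, 1) ⟨zero_le_one, le_refl 1⟩
  have hcurve : HasDerivWithinAt (fun t : ℝ => ((x0 : ℝ), t)) ((0 : ℝ), (1 : ℝ))
      (Set.Icc 0 1) 1 :=
    ((hasDerivAt_const (1:ℝ) x0).prodMk (hasDerivAt_id 1)).hasDerivWithinAt
  have hmaps : Set.MapsTo (fun t : ℝ => ((x0 : ℝ), t)) (Set.Icc 0 1) strip := fun t ht => ht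
  have hq := hdw.hasFDerivWithinAt.comp_hasDerivWithinAt 1 hcurve hmaps
  rw [hasDerivWithinAt_iff_tendsto_slope] at hq
  have hsub : Set.Ico (15/16 : ℝ) 1 ⊆ Set.Icc (0:ℝ) 1 \ {1} := by
    intro t ht
    exact ⟨⟨by linarith [ht.1], le_of_lt ht.2⟩, ne_of_lt ht.2⟩
  have hmono := nhdsWithin_mono (1:ℝ) hsub
  haveI : (𝓝[Set.Ico (15/16 : ℝ) 1] (1:ℝ)).NeBot := right_nhdsWithin_Ico_neBot (by norm_num)
  have hle : pdy Ψ (x0, 1) ≤ (1 - γ/2) - m/64 := by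
    apply le_of_tendsto (hq.mono_left hmono)
    filter_upwards [eventually_mem_nhdsWithin] with t ht
    have hlow' := hlow t ht
    have ht1 : t - 1 < 0 := by linarith [ht.2]
    show slope (Ψ ∘ fun t : ℝ => ((x0 : ℝ), t)) 1 t ≤ (1 - γ/2) - m/64
    rw [slope_def_field, div_le_iff_of_neg ht1]
    have hΨ1 : (Ψ ∘ fun t : ℝ => ((x0 : ℝ), t)) 1 = 1 - γ/2 := hΓ x0
    have hΨt : (Ψ ∘ fun t : ℝ => ((x0 : ℝ), t)) t = Ψ (x0, t) := rfl
    rw [hΨ1, hΨt]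
    nlinarith [hlow']
  linarith
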